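/- Let R : Matrix (Fin 3) (Fin 3) ℝ be special orthogonal (Rᵀ * R = 1 and det R = 1). Define φ_R : ℍ → ℍ by φ_R v = ⟨v.re, u 0, u 1, u 2⟩ where u = R.mulVec (imVec v). Then φ_R is an ℝ-algebra automorphism of the quaternions: it is additive, ℝ-linear, multiplicative (φ_R (v * w) = φ_R v * φ_R w), maps 1 to 1, is bijective, and moreover commutes with conjugation (φ_R (star v) = star (φ_R v)) and preserves real parts ((φ_R v).re = v.re). -/

import Mathlib

open Matrix

/-- The imaginary part of a quaternion as a vector in `Fin 3 → ℝ`. -/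
def imVec (q : Quaternion ℝ) : Fin 3 → ℝ := ![q.imI, q.imJ, q.imK]

/-- Rotating the imaginary part of a quaternion by a matrix `R`. -/
def rotQuat (R : Matrix (Fin 3) (Fin 3) ℝ) (v : Quaternion ℝ) : Quaternion ℝ :=
  ⟨v.re, R.mulVec (imVec v) 0, R.mulVec (imVec v) 1, R.mulVec (imVec v) 2⟩

/-- For a special orthogonal matrix `R`, the map `φ_R` rotating the imaginary
part of a quaternion by `R` is an ℝ-algebra automorphism of the quaternions
which commutes with conjugation and preserves real parts. -/
theorem rotQuat_isAlgebraAutomorphism (R : Matrix (Fin 3) (Fin 3) ℝ)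
    (hR : Rᵀ * R = 1) (hdet : R.det = 1) :
    (∀ v w : Quaternion ℝ, rotQuat R (v + w) = rotQuat R v + rotQuat R w) ∧
    (∀ (c : ℝ) (v : Quaternion ℝ), rotQuat R (c • v) = c • rotQuat R v) ∧
    (∀ v w : Quaternion ℝ, rotQuat R (v * w) = rotQuat R v * rotQuat R w) ∧
    rotQuat R 1 = 1 ∧
    Function.Bijective (rotQuat R) ∧
    (∀ v : Quaternion ℝ, rotQuat R (star v) = star (rotQuat R v)) ∧
    (∀ v : Quaternion ℝ, (rotQuat R v).re = v.re) := by
  have hRRt : R * Rᵀ = 1 := mul_eq_one_comm.mp hR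
  have hadj : R.adjugate = Rᵀ := by
    calc R.adjugate = R.adjugate * (R * Rᵀ) := by rw [hRRt, mul_one]
    _ = (R.adjugate * R) * Rᵀ := by rw [mul_assoc]
    _ = Rᵀ := by rw [Matrix.adjugate_mul, hdet, one_smul, one_mul]
  rw [Matrix.adjugate_fin_three] at hadj
  have ea := congrFun (congrFun hadj.symm 0) 0
  have eb := congrFun (congrFun hadj.symm 1) 0
  have ec := congrFun (congrFun hadj.symm 2) 0
  have ed := congrFun (congrFun hadj.symm 0) 1
  have ee := congrFun (congrFun hadj.symm 1) 1
  have ef := congrFun (congrFun hadj.symm 2) 1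
  have eg2 := congrFun (congrFun hadj.symm 0) 2
  have eh2 := congrFun (congrFun hadj.symm 1) 2
  have ei2 := congrFun (congrFun hadj.symm 2) 2
  simp at ea eb ec ed ee ef eg2 eh2 ei2
  have hE : ∀ i j : Fin 3, R 0 i * R 0 j + R 1 i * R 1 j + R 2 i * R 2 j
      = if i = j then 1 else 0 := by
    intro i j
    have := congrFun (congrFun hR i) j
    simpa [Matrix.mul_apply, Fin.sum_univ_three, Matrix.one_apply] using this
  have h00 : R 0 0 * R 0 0 + R 1 0 * R 1 0 + R 2 0 * R 2 0 = 1 := by simpa using hE 0 0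
  have h11 : R 0 1 * R 0 1 + R 1 1 * R 1 1 + R 2 1 * R 2 1 = 1 := by simpa using hE 1 1
  have h22 : R 0 2 * R 0 2 + R 1 2 * R 1 2 + R 2 2 * R 2 2 = 1 := by simpa using hE 2 2
  have h01 : R 0 0 * R 0 1 + R 1 0 * R 1 1 + R 2 0 * R 2 1 = 0 := by simpa using hE 0 1
  have h02 : R 0 0 * R 0 2 + R 1 0 * R 1 2 + R 2 0 * R 2 2 = 0 := by simpa using hE 0 2
  have h12 : R 0 1 * R 0 2 + R 1 1 * R 1 2 + R 2 1 * R 2 2 = 0 := by simpa using hE 1 2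
  refine ⟨?_, ?_, ?_, ?_, ?_, ?_, ?_⟩
  · intro v w
    ext <;> simp only [Quaternion.re_add, Quaternion.imI_add, Quaternion.imJ_add, Quaternion.imK_add] <;> simp [rotQuat, imVec, Matrix.mulVec, dotProduct, Fin.sum_univ_three] <;> ring
  · intro c v
    ext <;> simp only [Quaternion.re_smul, Quaternion.imI_smul, Quaternion.imJ_smul, Quaternion.imK_smul] <;> simp [rotQuat, imVec, Matrix.mulVec, dotProduct, Fin.sum_univ_three] <;> ring
  · intro v w
    ext <;>
      simp only [Quaternion.re_mul, Quaternion.imI_mul, Quaternion.imJ_mul, Quaternion.imK_mul] <;>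
      simp only [rotQuat, imVec, Matrix.mulVec, dotProduct, Fin.sum_univ_three,
        Quaternion.re_mul, Quaternion.imI_mul, Quaternion.imJ_mul, Quaternion.imK_mul,
        Matrix.cons_val_zero, Matrix.cons_val_one, Matrix.head_cons, Matrix.cons_val_two,
        Matrix.tail_cons]
    · linear_combination v.imI*w.imI*h00 + v.imJ*w.imJ*h11 + v.imK*w.imK*h22 +
        (v.imI*w.imJ + v.imJ*w.imI)*h01 + (v.imI*w.imK + v.imK*w.imI)*h02 +
        (v.imJ*w.imK + v.imK*w.imJ)*h12
    · linear_combination (v.imJ*w.imK - v.imK*w.imJ)*ea + (v.imK*w.imI - v.imI*w.imK)*eb +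
        (v.imI*w.imJ - v.imJ*w.imI)*ec
    · linear_combination (v.imJ*w.imK - v.imK*w.imJ)*ed + (v.imK*w.imI - v.imI*w.imK)*ee +
        (v.imI*w.imJ - v.imJ*w.imI)*ef
    · linear_combination (v.imJ*w.imK - v.imK*w.imJ)*eg2 + (v.imK*w.imI - v.imI*w.imK)*eh2 +
        (v.imI*w.imJ - v.imJ*w.imI)*ei2
  · ext <;> simp [rotQuat, imVec, Matrix.mulVec, dotProduct, Fin.sum_univ_three, Quaternion.re_one, Quaternion.imI_one, Quaternion.imJ_one, Quaternion.imK_one]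
  · have key : ∀ (A B : Matrix (Fin 3) (Fin 3) ℝ), A * B = 1 →
        ∀ v, rotQuat A (rotQuat B v) = v := by
      intro A B hAB v
      have him : imVec (rotQuat B v) = B.mulVec (imVec v) := by
        funext i; fin_cases i <;> rfl
      have h2 : A.mulVec (B.mulVec (imVec v)) = imVec v := by
        rw [Matrix.mulVec_mulVec, hAB, Matrix.one_mulVec]
      conv_lhs => rw [rotQuat]
      rw [him, h2]
      ext <;> simp [rotQuat, imVec]
    exact Function.bijective_iff_has_inverse.mpr
      ⟨rotQuat Rᵀ, key Rᵀ R hR, key R Rᵀ hRRt⟩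
  · intro v
    ext <;> simp only [Quaternion.re_star, Quaternion.imI_star, Quaternion.imJ_star, Quaternion.imK_star] <;> simp [rotQuat, imVec, Matrix.mulVec, dotProduct, Fin.sum_univ_three] <;> ring
  · intro v; rfl
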